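/- With the convention Σ'_{i=a}^{b} f_i := Σ_{i=a}^{b} f_i when a ≤ b+1 and Σ'_{i=a}^{b} f_i := −Σ_{i=b+1}^{a-1} f_i when a ≥ b+1, the following telescoping identity of rational functions holds: for φ(ẑ_i) := z_1^{b_1} ⋯ z_{i-1}^{b_{i-1}} z_{i+1}^{b_i} ⋯ z_{l+1}^{b_l} divided by ∏_{j≠i,i-1, 1≤j≤l}(1 − qt z_j/z_{j+1}) · (1 − qt z_{i-1}/z_{i+1}), one has Σ_{i=1}^{l} (z_i^a φ(ẑ_i) − φ(ẑ_{i+1}) z_{i+1}^a) / ((1 − z_{i+1}/z_i)(1 − qt z_i/z_{i+1})) = − ( Σ_{i=1}^{l} z_1^{b_1} ⋯ z_{i-1}^{b_{i-1}} ( Σ'_{k=a+1}^{b_i} z_i^k z_{i+1}^{a+b_i−k} ) z_{i+2}^{b_{i+1}} ⋯ z_{l+1}^{b_l} ) / ∏_{j=1}^{l} (1 − qt z_j/z_{j+1}). -/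

import Mathlib

/-- The signed sum `Σ'_{k=a}^{b} f k`: equal to `Σ_{k=a}^{b} f k` when `a ≤ b + 1`
and to `−Σ_{k=b+1}^{a−1} f k` when `a ≥ b + 1`. -/
noncomputable def sump {F : Type*} [AddCommGroup F] (a b : ℤ) (f : ℤ → F) : F :=
  if a ≤ b + 1 then ∑ k ∈ Finset.Icc a b, f k else -∑ k ∈ Finset.Icc (b + 1) (a - 1), f k

/-- The rational function `φ(ẑ_i)` obtained from the Negut kernel by omitting `z_i`,
with the conventions `z_0 = 0`, `z_{l+2} = ∞`. -/
noncomputable def phiHat {F : Type*} [Field F] (q t : F) (z : ℕ → F) (b : ℕ → ℤ)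
    (l i : ℕ) : F :=
  ((∏ j ∈ Finset.Icc 1 (i - 1), z j ^ (b j)) * (∏ j ∈ Finset.Icc i l, z (j + 1) ^ (b j))) /
    ((if 2 ≤ i ∧ i ≤ l then 1 - q * t * (z (i - 1) / z (i + 1)) else 1) *
      ∏ j ∈ (Finset.Icc 1 l).filter (fun j => j ≠ i ∧ j ≠ i - 1),
        (1 - q * t * (z j / z (j + 1))))

namespace ExtDeltaAux

variable {F : Type*} [Field F]

lemma telescope_Icc (h : ℤ → F) (m : ℤ) :
    ∀ n, m - 1 ≤ n → ∑ k ∈ Finset.Icc m n, (h k - h (k - 1)) = h n - h (m - 1) := by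
  refine Int.le_induction ?_ ?_
  · rw [Finset.Icc_eq_empty (by omega)]
    simp
  · intro n hn ih
    have hins : Finset.Icc m (n + 1) = insert (n + 1) (Finset.Icc m n) := by
      ext k; simp [Finset.mem_Icc]; omega
    rw [hins, Finset.sum_insert (by simp [Finset.mem_Icc]), ih]
    ring_nf

lemma sump_geom (u w : F) (hu : u ≠ 0) (hw : w ≠ 0) (a bb : ℤ) :
    (1 - w / u) * sump (a + 1) bb (fun k => u ^ k * w ^ (a + bb - k))
      = u ^ bb * w ^ a - u ^ a * w ^ bb := by
  set h : ℤ → F := fun k => u ^ k * w ^ (a + bb - k) with hh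
  have hstep : ∀ k : ℤ, (1 - w / u) * h k = h k - h (k - 1) := by
    intro k
    simp only [hh]
    have h1 : u ^ k = u ^ (k - 1) * u := by
      rw [← zpow_add_one₀ hu]; ring_nf
    have h2 : w ^ (a + bb - (k - 1)) = w ^ (a + bb - k) * w := by
      rw [← zpow_add_one₀ hw]; ring_nf
    rw [h2]
    field_simp
    rw [h1]
    ring
  rw [sump]
  split_ifs with hc
  · rw [Finset.mul_sum]
    simp_rw [hstep]
    rw [telescope_Icc h (a + 1) bb (by omega)]
    simp only [hh]
    rw [show a + bb - (a + 1 - 1) = bb by ring, show a + 1 - 1 = a by ring,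
      show a + bb - bb = a by ring]
  · push_neg at hc
    rw [mul_neg, Finset.mul_sum]
    simp_rw [hstep]
    rw [show a + 1 - 1 = a by ring, telescope_Icc h (bb + 1) a (by omega)]
    simp only [hh]
    rw [show a + bb - (bb + 1 - 1) = a by ring, show bb + 1 - 1 = bb by ring,
      show a + bb - a = bb by ring]
    ring

noncomputable def ff (q t : F) (z : ℕ → F) (j : ℕ) : F := 1 - q * t * (z j / z (j + 1))
noncomputable def gg (z : ℕ → F) (i : ℕ) : F := 1 - z (i + 1) / z i
noncomputable def cc (q t : F) (z : ℕ → F) (l i : ℕ) : F :=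
  if 2 ≤ i ∧ i ≤ l then 1 - q * t * (z (i - 1) / z (i + 1)) else 1
noncomputable def NN (z : ℕ → F) (b : ℕ → ℤ) (l i : ℕ) : F :=
  (∏ j ∈ Finset.Icc 1 (i - 1), z j ^ (b j)) * (∏ j ∈ Finset.Icc i l, z (j + 1) ^ (b j))
noncomputable def DD (q t : F) (z : ℕ → F) (l : ℕ) : F := ∏ j ∈ Finset.Icc 1 l, ff q t z j
noncomputable def DDp (q t : F) (z : ℕ → F) (l i : ℕ) : F :=
  ∏ j ∈ (Finset.Icc 1 l).filter (fun j => j ≠ i ∧ j ≠ i - 1), ff q t z j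
noncomputable def MM (z : ℕ → F) (a : ℤ) (b : ℕ → ℤ) (l i : ℕ) : F :=
  (∏ j ∈ Finset.Icc 1 (i - 1), z j ^ (b j)) *
    sump (a + 1) (b i) (fun k => z i ^ k * z (i + 1) ^ (a + b i - k)) *
    ∏ j ∈ Finset.Icc (i + 1) l, z (j + 1) ^ (b j)
noncomputable def TT (q t : F) (z : ℕ → F) (a : ℤ) (b : ℕ → ℤ) (l i : ℕ) : F :=
  q * t * (z (i - 1) / z (i + 1)) * (z i ^ a * NN z b l i) / cc q t z l i

lemma phiHat_eq (q t : F) (z : ℕ → F) (b : ℕ → ℤ) (l i : ℕ) :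
    phiHat q t z b l i = NN z b l i / (cc q t z l i * DDp q t z l i) := rfl

lemma Dfac1 (q t : F) (z : ℕ → F) (l i : ℕ) (hi1 : 1 ≤ i) (hil : i ≤ l) :
    DD q t z l = DDp q t z l i * ff q t z i * (if 2 ≤ i then ff q t z (i - 1) else 1) := by
  classical
  rw [DD, ← Finset.prod_filter_mul_prod_filter_not (Finset.Icc 1 l)
    (fun j => j ≠ i ∧ j ≠ i - 1) (ff q t z), ← DDp, mul_assoc]
  congr 1
  have hset : (Finset.Icc 1 l).filter (fun j => ¬(j ≠ i ∧ j ≠ i - 1)) =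
      if 2 ≤ i then {i - 1, i} else {i} := by
    split_ifs with h <;> (ext j; simp only [Finset.mem_filter, Finset.mem_Icc,
      Finset.mem_insert, Finset.mem_singleton, not_and, not_ne_iff, ne_eq, not_not]; omega)
  rw [hset]
  split_ifs with h
  · rw [Finset.prod_insert (by simp; omega), Finset.prod_singleton]
    ring
  · rw [Finset.prod_singleton, mul_one]

lemma Dfac2 (q t : F) (z : ℕ → F) (l i : ℕ) (hi1 : 1 ≤ i) (hil : i ≤ l) :
    DD q t z l = DDp q t z l (i + 1) * ff q t z i *
      (if i + 1 ≤ l then ff q t z (i + 1) else 1) := by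
  classical
  rw [DD, ← Finset.prod_filter_mul_prod_filter_not (Finset.Icc 1 l)
    (fun j => j ≠ i + 1 ∧ j ≠ i + 1 - 1) (ff q t z), ← DDp, mul_assoc]
  congr 1
  have hset : (Finset.Icc 1 l).filter (fun j => ¬(j ≠ i + 1 ∧ j ≠ i + 1 - 1)) =
      if i + 1 ≤ l then {i + 1, i} else {i} := by
    split_ifs with h <;> (ext j; simp only [Finset.mem_filter, Finset.mem_Icc,
      Finset.mem_insert, Finset.mem_singleton, not_and, not_ne_iff, ne_eq, not_not]; omega)
  rw [hset]
  split_ifs with h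
  · rw [Finset.prod_insert (by simp), Finset.prod_singleton]
    ring
  · rw [Finset.prod_singleton, mul_one]

lemma NMrel (q t : F) (z : ℕ → F) (a : ℤ) (b : ℕ → ℤ) (l i : ℕ) (hi1 : 1 ≤ i) (hil : i ≤ l)
    (hzi : z i ≠ 0) (hzi1 : z (i + 1) ≠ 0) :
    z i ^ a * NN z b l i - NN z b l (i + 1) * z (i + 1) ^ a
      = -(gg z i * MM z a b l i) := by
  have hNi : NN z b l i = (∏ j ∈ Finset.Icc 1 (i - 1), z j ^ (b j)) *
      (z (i + 1) ^ (b i) * ∏ j ∈ Finset.Icc (i + 1) l, z (j + 1) ^ (b j)) := by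
    rw [NN]
    congr 1
    rw [show Finset.Icc i l = insert i (Finset.Icc (i + 1) l) by
      ext j; simp only [Finset.mem_Icc, Finset.mem_insert]; omega,
      Finset.prod_insert (by simp)]
  have hNi1 : NN z b l (i + 1) = ((∏ j ∈ Finset.Icc 1 (i - 1), z j ^ (b j)) * z i ^ (b i)) *
      ∏ j ∈ Finset.Icc (i + 1) l, z (j + 1) ^ (b j) := by
    rw [NN]
    congr 1
    rw [show Finset.Icc 1 (i + 1 - 1) = insert i (Finset.Icc 1 (i - 1)) by
      ext j; simp only [Finset.mem_Icc, Finset.mem_insert]; omega,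
      Finset.prod_insert (by simp; omega)]
    ring
  rw [hNi, hNi1, gg, MM]
  have hgeom := sump_geom (z i) (z (i + 1)) hzi hzi1 a (b i)
  linear_combination ((∏ j ∈ Finset.Icc 1 (i - 1), z j ^ (b j)) *
    ∏ j ∈ Finset.Icc (i + 1) l, z (j + 1) ^ (b j)) * hgeom

lemma Rrel1 (q t : F) (z : ℕ → F) (l i : ℕ) (hil : i ≤ l)
    (hzi : z i ≠ 0) (hzi1 : z (i + 1) ≠ 0) :
    (if 2 ≤ i then ff q t z (i - 1) else 1)
      = cc q t z l i + (if 2 ≤ i then q * t * (z (i - 1) / z (i + 1)) else 0) * gg z i := by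
  by_cases h : 2 ≤ i
  · simp only [cc, if_pos h, if_pos (show 2 ≤ i ∧ i ≤ l from ⟨h, hil⟩), ff, gg]
    have : z (i - 1 + 1) = z i := by congr 1; omega
    rw [this]
    field_simp
    ring
  · simp [cc, h]

lemma Rrel2 (q t : F) (z : ℕ → F) (l i : ℕ) (hi1 : 1 ≤ i)
    (hzi : z i ≠ 0) (hzi2 : i + 1 ≤ l → z (i + 1 + 1) ≠ 0) :
    (if i + 1 ≤ l then ff q t z (i + 1) else 1)
      = cc q t z l (i + 1) + (if i + 1 ≤ l then q * t * (z i / z (i + 1 + 1)) else 0) * gg z i := by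
  by_cases h : i + 1 ≤ l
  · simp only [cc, if_pos h, if_pos (show 2 ≤ i + 1 ∧ i + 1 ≤ l from ⟨by omega, h⟩), ff, gg]
    have h2 : z (i + 1 - 1) = z i := by congr 1
    rw [h2]
    have := hzi2 h
    field_simp
    ring
  · simp [cc, h]

lemma term_eq (q t : F) (z : ℕ → F) (a : ℤ) (b : ℕ → ℤ) (l i : ℕ)
    (hi1 : 1 ≤ i) (hil : i ≤ l)
    (hzi : z i ≠ 0) (hzi1 : z (i + 1) ≠ 0) (hzi2 : i + 1 ≤ l → z (i + 1 + 1) ≠ 0)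
    (hf : ff q t z i ≠ 0) (hg : gg z i ≠ 0)
    (hc1 : cc q t z l i ≠ 0) (hc2 : cc q t z l (i + 1) ≠ 0)
    (hDD : DD q t z l ≠ 0) (hD1 : DDp q t z l i ≠ 0) (hD2 : DDp q t z l (i + 1) ≠ 0) :
    (z i ^ a * phiHat q t z b l i - phiHat q t z b l (i + 1) * z (i + 1) ^ a) /
      (gg z i * ff q t z i)
    = (-(MM z a b l i) + (if 2 ≤ i then TT q t z a b l i else 0)
        - (if i + 1 ≤ l then TT q t z a b l (i + 1) else 0)) / DD q t z l := by
  have hU : (if 2 ≤ i then TT q t z a b l i else 0)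
      = (if 2 ≤ i then q * t * (z (i - 1) / z (i + 1)) else 0) * (z i ^ a * NN z b l i)
          / cc q t z l i := by
    split_ifs with h
    · rw [TT]
    · simp
  have hV : (if i + 1 ≤ l then TT q t z a b l (i + 1) else 0)
      = (if i + 1 ≤ l then q * t * (z i / z (i + 1 + 1)) else 0)
          * (z (i + 1) ^ a * NN z b l (i + 1)) / cc q t z l (i + 1) := by
    split_ifs with h
    · simp [TT]
    · simp
  have hR1 := Rrel1 q t z l i hil hzi hzi1
  have hR2 := Rrel2 q t z l i hi1 hzi hzi2
  have hNM := NMrel q t z a b l i hi1 hil hzi hzi1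
  rw [phiHat_eq, phiHat_eq, hU, hV,
    div_eq_div_iff (mul_ne_zero hg hf) hDD, sub_mul]
  nth_rewrite 1 [Dfac1 q t z l i hi1 hil]
  nth_rewrite 1 [Dfac2 q t z l i hi1 hil]
  rw [hR1, hR2]
  set A := z i ^ a
  set W := z (i + 1) ^ a
  set N := NN z b l i
  set N' := NN z b l (i + 1)
  set c := cc q t z l i
  set c' := cc q t z l (i + 1)
  set D1 := DDp q t z l i
  set D2 := DDp q t z l (i + 1)
  set f := ff q t z i
  set g := gg z i
  set M := MM z a b l i
  set r1 := (if 2 ≤ i then q * t * (z (i - 1) / z (i + 1)) else 0)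
  set r2 := (if i + 1 ≤ l then q * t * (z i / z (i + 1 + 1)) else 0)
  field_simp
  linear_combination (c * c') * hNM

end ExtDeltaAux

open ExtDeltaAux in
/-- The telescoping identity of rational functions used in the proof of the Negut
commutator formula. -/
theorem extended_delta_stmt6 {F : Type*} [Field F] (l : ℕ) (q t : F) (z : ℕ → F)
    (a : ℤ) (b : ℕ → ℤ)
    (hz : ∀ j ∈ Finset.Icc 1 (l + 1), z j ≠ 0)
    (h1 : ∀ j ∈ Finset.Icc 1 l, 1 - q * t * (z j / z (j + 1)) ≠ 0)
    (h2 : ∀ i ∈ Finset.Icc 1 l, 1 - z (i + 1) / z i ≠ 0)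
    (h3 : ∀ i ∈ Finset.Icc 2 l, 1 - q * t * (z (i - 1) / z (i + 1)) ≠ 0) :
    ∑ i ∈ Finset.Icc 1 l,
        (z i ^ a * phiHat q t z b l i - phiHat q t z b l (i + 1) * z (i + 1) ^ a) /
          ((1 - z (i + 1) / z i) * (1 - q * t * (z i / z (i + 1)))) =
    -((∑ i ∈ Finset.Icc 1 l,
          (∏ j ∈ Finset.Icc 1 (i - 1), z j ^ (b j)) *
            sump (a + 1) (b i) (fun k => z i ^ k * z (i + 1) ^ (a + b i - k)) *
            ∏ j ∈ Finset.Icc (i + 1) l, z (j + 1) ^ (b j)) /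
        ∏ j ∈ Finset.Icc 1 l, (1 - q * t * (z j / z (j + 1)))) := by
  classical
  have hDD : DD q t z l ≠ 0 := by
    rw [DD]
    exact Finset.prod_ne_zero_iff.mpr (fun j hj => h1 j hj)
  have hDp : ∀ i, DDp q t z l i ≠ 0 := fun i => by
    rw [DDp]
    exact Finset.prod_ne_zero_iff.mpr (fun j hj => h1 j (Finset.mem_filter.mp hj).1)
  have hcc : ∀ k, cc q t z l k ≠ 0 := fun k => by
    rw [cc]
    split_ifs with h
    · exact h3 k (Finset.mem_Icc.mpr ⟨h.1, h.2⟩)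
    · exact one_ne_zero
  show ∑ i ∈ Finset.Icc 1 l,
      (z i ^ a * phiHat q t z b l i - phiHat q t z b l (i + 1) * z (i + 1) ^ a) /
        (gg z i * ff q t z i)
    = -((∑ i ∈ Finset.Icc 1 l, MM z a b l i) / DD q t z l)
  have hterm : ∀ i ∈ Finset.Icc 1 l,
      (z i ^ a * phiHat q t z b l i - phiHat q t z b l (i + 1) * z (i + 1) ^ a) /
        (gg z i * ff q t z i)
      = (-(MM z a b l i) + (if 2 ≤ i then TT q t z a b l i else 0)
          - (if i + 1 ≤ l then TT q t z a b l (i + 1) else 0)) / DD q t z l := by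
    intro i hi
    obtain ⟨hi1, hil⟩ := Finset.mem_Icc.mp hi
    exact term_eq q t z a b l i hi1 hil
      (hz i (Finset.mem_Icc.mpr ⟨hi1, by omega⟩))
      (hz (i + 1) (Finset.mem_Icc.mpr ⟨by omega, by omega⟩))
      (fun h => hz (i + 1 + 1) (Finset.mem_Icc.mpr ⟨by omega, by omega⟩))
      (h1 i hi) (h2 i hi) (hcc i) (hcc (i + 1)) hDD (hDp i) (hDp (i + 1))
  rw [Finset.sum_congr rfl hterm, ← Finset.sum_div]
  have hUV : ∑ i ∈ Finset.Icc 1 l, (if 2 ≤ i then TT q t z a b l i else 0)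
      = ∑ i ∈ Finset.Icc 1 l, (if i + 1 ≤ l then TT q t z a b l (i + 1) else 0) := by
    rw [← Finset.sum_filter, ← Finset.sum_filter]
    have e1 : (Finset.Icc 1 l).filter (fun i => 2 ≤ i) = Finset.Icc 2 l := by
      ext j; simp [Finset.mem_filter, Finset.mem_Icc]; omega
    have e2 : (Finset.Icc 1 l).filter (fun i => i + 1 ≤ l) = Finset.Icc 1 (l - 1) := by
      ext j; simp [Finset.mem_filter, Finset.mem_Icc]; omega
    rw [e1, e2]
    have e3 : Finset.Icc 2 l
        = Finset.map ⟨fun x => x + 1, add_left_injective 1⟩ (Finset.Icc 1 (l - 1)) := by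
      ext j
      simp only [Finset.mem_map, Finset.mem_Icc, Function.Embedding.coeFn_mk]
      constructor
      · intro hj
        exact ⟨j - 1, by omega, by omega⟩
      · rintro ⟨x, hx, rfl⟩
        omega
    rw [e3, Finset.sum_map]
    rfl
  rw [Finset.sum_sub_distrib, Finset.sum_add_distrib, hUV]
  have : ∑ i ∈ Finset.Icc 1 l, -MM z a b l i = -∑ i ∈ Finset.Icc 1 l, MM z a b l i :=
    Finset.sum_neg_distrib _
  rw [this]
  ring
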